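/- Let W be an r × r lower triangular matrix with positive diagonal entries, Ω = WW^T, and parametrize W by ω = v(W*) where W*_{ii} = log(W_{ii}) and W*_{ij} = W_{ij} for i ≠ j. Then the map ω ↦ v(Ω) from ℝ^{r(r+1)/2} to ℝ^{r(r+1)/2} has Jacobian determinant |∂v(Ω)/∂ω| = 2^r · ∏_{i=1}^r W_{ii}^{r−i+2}. Equivalently, the density induced on ω by a density p(Ω) on positive definite matrices satisfies log p(ω) = log p(Ω) + r log 2 + Σ_{i=1}^r (r−i+2) log(W_{ii}). -/

import Mathlib

open Matrix

/-- Index set of the lower-triangular positions of an `r × r` matrix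
(the index set of the half-vectorization `v(·)`). -/
abbrev LTIdx (r : ℕ) := {q : Fin r × Fin r // q.2 ≤ q.1}

/-- The log-Cholesky parametrization `ω ↦ W`: `W` is lower triangular with
`W_{ii} = exp(ω_{ii})` and `W_{ij} = ω_{ij}` for `j < i`. -/
noncomputable def Wof {r : ℕ} (ω : LTIdx r → ℝ) : Matrix (Fin r) (Fin r) ℝ :=
  fun i j => if h : j ≤ i then
      (if i = j then Real.exp (ω ⟨(i, j), h⟩) else ω ⟨(i, j), h⟩) else 0

/-- The half-vectorization of `Ω(ω) = W(ω) W(ω)ᵀ` as a function of `ω`. -/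
noncomputable def vOmega {r : ℕ} (ω : LTIdx r → ℝ) : LTIdx r → ℝ :=
  fun q => (Wof ω * (Wof ω)ᵀ) q.1.1 q.1.2

/-- derivative of the (i,j) entry of `Wof` -/
noncomputable def dW {r : ℕ} (ω0 : LTIdx r → ℝ) (i j : Fin r) : (LTIdx r → ℝ) →L[ℝ] ℝ :=
  if h : j ≤ i then (if i = j then Wof ω0 i i else 1) • ContinuousLinearMap.proj ⟨(i, j), h⟩
  else 0

lemma Wof_diag {r : ℕ} (ω0 : LTIdx r → ℝ) (i : Fin r) :
    Wof ω0 i i = Real.exp (ω0 ⟨(i, i), le_refl i⟩) := by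
  simp [Wof]

lemma hasFDerivAt_Wof {r : ℕ} (ω0 : LTIdx r → ℝ) (i j : Fin r) :
    HasFDerivAt (fun ω => Wof ω i j) (dW ω0 i j) ω0 := by
  unfold Wof dW
  by_cases h : j ≤ i
  · simp only [dif_pos h]
    by_cases hij : i = j
    · subst hij
      simp only [if_pos rfl]
      have := ((ContinuousLinearMap.proj (R := ℝ)
        (φ := fun _ : LTIdx r => ℝ) ⟨(i, i), h⟩).hasFDerivAt (x := ω0)).exp
      simpa [Wof_diag] using this
    · simp only [if_neg hij, one_smul]
      exact (ContinuousLinearMap.proj (R := ℝ)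
        (φ := fun _ : LTIdx r => ℝ) ⟨(i, j), h⟩).hasFDerivAt
  · simp only [dif_neg h]
    exact hasFDerivAt_const 0 ω0

/-- Total derivative of `vOmega` at `ω0`. -/
noncomputable def Lder {r : ℕ} (ω0 : LTIdx r → ℝ) : (LTIdx r → ℝ) →L[ℝ] (LTIdx r → ℝ) :=
  ContinuousLinearMap.pi fun q =>
    ∑ k : Fin r, (Wof ω0 q.1.1 k • dW ω0 q.1.2 k + Wof ω0 q.1.2 k • dW ω0 q.1.1 k)

lemma hasFDerivAt_vOmega {r : ℕ} (ω0 : LTIdx r → ℝ) :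
    HasFDerivAt (vOmega (r := r)) (Lder ω0) ω0 := by
  have hv : vOmega (r := r) = fun ω q => ∑ k : Fin r, Wof ω q.1.1 k * Wof ω q.1.2 k := by
    funext ω q
    simp [vOmega, Matrix.mul_apply]
  rw [hv]
  refine hasFDerivAt_pi.2 fun q => ?_
  exact HasFDerivAt.fun_sum fun k _ =>
    (hasFDerivAt_Wof ω0 q.1.1 k).mul (hasFDerivAt_Wof ω0 q.1.2 k)

lemma fderiv_vOmega {r : ℕ} (ω0 : LTIdx r → ℝ) :
    fderiv ℝ (vOmega (r := r)) ω0 = Lder ω0 :=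
  (hasFDerivAt_vOmega ω0).fderiv

/-- explicit Jacobian matrix entries -/
lemma Lder_matrix {r : ℕ} (ω0 : LTIdx r → ℝ) (p c : LTIdx r) :
    LinearMap.toMatrix' ((Lder ω0 : (LTIdx r → ℝ) →L[ℝ] (LTIdx r → ℝ)) :
      (LTIdx r → ℝ) →ₗ[ℝ] (LTIdx r → ℝ)) p c
    = (if p.1.1 = c.1.1 ∧ c.1.2 ≤ p.1.1 then
          (if c.1.1 = c.1.2 then Wof ω0 c.1.1 c.1.1 else 1) * Wof ω0 p.1.2 c.1.2 else 0)
      + (if p.1.2 = c.1.1 ∧ c.1.2 ≤ p.1.2 then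
          Wof ω0 p.1.1 c.1.2 * (if c.1.1 = c.1.2 then Wof ω0 c.1.1 c.1.1 else 1) else 0) := by
  rw [LinearMap.toMatrix'_apply]
  have hd : ∀ i k : Fin r, dW (r := r) ω0 i k (fun j' => if j' = c then 1 else 0)
      = if i = c.1.1 ∧ k = c.1.2 then (if i = k then Wof ω0 i i else 1) else 0 := by
    intro i k
    unfold dW
    by_cases h : k ≤ i
    · simp only [dif_pos h, ContinuousLinearMap.smul_apply, ContinuousLinearMap.proj_apply,
        smul_eq_mul]
      by_cases hc : (⟨(i, k), h⟩ : LTIdx r) = c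
      · have h1 : i = c.1.1 := by rw [← hc]
        have h2 : k = c.1.2 := by rw [← hc]
        simp [hc, h1, h2]
      · have hnot : ¬(i = c.1.1 ∧ k = c.1.2) := by
          rintro ⟨rfl, rfl⟩
          exact hc (Subtype.ext rfl)
        simp [hc, hnot]
    · simp only [dif_neg h]
      have hnot : ¬(i = c.1.1 ∧ k = c.1.2) := by
        rintro ⟨rfl, rfl⟩
        exact h c.2
      simp [hnot]
  have hps : (Pi.single c (1:ℝ) : LTIdx r → ℝ) = fun j' => if j' = c then 1 else 0 := by
    funext j'; simp [Pi.single_apply]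
  simp only [Lder, ContinuousLinearMap.coe_coe, ContinuousLinearMap.pi_apply,
    ContinuousLinearMap.sum_apply, ContinuousLinearMap.add_apply,
    ContinuousLinearMap.smul_apply, hps, hd, smul_eq_mul]
  rw [Finset.sum_eq_single c.1.2]
  · have hle1 : p.1.1 = c.1.1 → c.1.2 ≤ p.1.1 := fun h => h ▸ c.2
    have hle2 : p.1.2 = c.1.1 → c.1.2 ≤ p.1.2 := fun h => h ▸ c.2
    by_cases h1 : p.1.1 = c.1.1 <;> by_cases h2 : p.1.2 = c.1.1 <;>
      simp [h1, h2, hle1, hle2, mul_comm, c.2]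
  · intro k _ hk
    simp [hk]
  · simp


lemma Wof_zero {r : ℕ} (ω : LTIdx r → ℝ) {i j : Fin r} (h : ¬ j ≤ i) : Wof ω i j = 0 := by
  simp [Wof, h]

lemma Wof_diag_pos {r : ℕ} (ω : LTIdx r → ℝ) (i : Fin r) : 0 < Wof ω i i := by
  rw [Wof_diag]; exact Real.exp_pos _

/-- key for the triangular ordering -/
def ltKey {r : ℕ} (q : LTIdx r) : ℕ := q.1.2 * r + q.1.1

lemma ltKey_inj {r : ℕ} : Function.Injective (ltKey (r := r)) := by
  intro p c h
  unfold ltKey at h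
  have hp1 := p.1.1.isLt
  have hc1 := c.1.1.isLt
  have hr : 0 < r := lt_of_le_of_lt (Nat.zero_le _) hp1
  have h' : r * (p.1.2 : ℕ) + p.1.1 = r * (c.1.2 : ℕ) + c.1.1 := by
    rw [Nat.mul_comm, Nat.mul_comm r (c.1.2 : ℕ)]; exact h
  have h1 : (p.1.1 : ℕ) = c.1.1 := by
    have := congrArg (· % r) h'
    simpa [Nat.mul_add_mod, Nat.mod_eq_of_lt hp1, Nat.mod_eq_of_lt hc1] using this
  have h2 : (p.1.2 : ℕ) = c.1.2 := by
    have := congrArg (· / r) h'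
    simpa [Nat.mul_add_div hr, Nat.div_eq_of_lt hp1, Nat.div_eq_of_lt hc1] using this
  exact Subtype.ext (Prod.ext (Fin.ext h1) (Fin.ext h2))

lemma det_Lder {r : ℕ} (ω0 : LTIdx r → ℝ) :
    LinearMap.det ((Lder ω0 : (LTIdx r → ℝ) →L[ℝ] (LTIdx r → ℝ)) :
        (LTIdx r → ℝ) →ₗ[ℝ] (LTIdx r → ℝ))
      = ∏ p : LTIdx r,
          (if p.1.1 = p.1.2 then 2 * Wof ω0 p.1.2 p.1.2 ^ 2 else Wof ω0 p.1.2 p.1.2) := by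
  rw [← LinearMap.det_toMatrix']
  letI : LinearOrder (LTIdx r) := LinearOrder.lift' ltKey ltKey_inj
  rw [Matrix.det_of_lowerTriangular]
  · refine Finset.prod_congr rfl fun p _ => ?_
    rw [Lder_matrix]
    obtain ⟨⟨i, j⟩, hij⟩ := p
    by_cases h : i = j
    · subst h
      simp only [if_pos rfl]
      simp
      ring
    · have h' : ¬ j = i := fun e => h e.symm
      simp [h, h', hij]
  · intro p c hpc
    have hkey : ltKey p < ltKey c := hpc
    rw [Lder_matrix]
    have hp1 := p.1.1.isLt
    have hc1 := c.1.1.isLt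
    have hp := p.2
    have hc := c.2
    have t1 : ¬(p.1.1 = c.1.1 ∧ c.1.2 ≤ p.1.1) ∨ ¬ (c.1.2 ≤ p.1.2) := by
      by_contra hcon
      push_neg at hcon
      obtain ⟨⟨h1, _⟩, h2⟩ := hcon
      have hle : ltKey c ≤ ltKey p := by
        unfold ltKey
        have e1 : (p.1.1 : ℕ) = c.1.1 := congrArg Fin.val h1
        have e2 : (c.1.2 : ℕ) ≤ p.1.2 := h2
        nlinarith
      exact absurd hkey (not_lt.2 hle)
    have t2 : ¬(p.1.2 = c.1.1 ∧ c.1.2 ≤ p.1.2) := by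
      rintro ⟨h1, h2⟩
      have hle : ltKey c ≤ ltKey p := by
        unfold ltKey
        have e1 : (p.1.2 : ℕ) = c.1.1 := congrArg Fin.val h1
        have e2 : (c.1.2 : ℕ) ≤ p.1.2 := h2
        have e3 : (p.1.2 : ℕ) ≤ p.1.1 := p.2
        nlinarith
      exact absurd hkey (not_lt.2 hle)
    rcases t1 with h | h
    · rw [if_neg h, if_neg t2, add_zero]
    · rw [if_neg t2, add_zero, Wof_zero ω0 h, mul_zero, ite_self]

/-- reindexing equiv for the product -/
def ltEquiv (r : ℕ) : LTIdx r ≃ Σ j : Fin r, {i : Fin r // j ≤ i} where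
  toFun q := ⟨q.1.2, ⟨q.1.1, q.2⟩⟩
  invFun s := ⟨(s.2.1, s.1), s.2.2⟩
  left_inv q := rfl
  right_inv s := rfl

lemma prod_diag {r : ℕ} (ω0 : LTIdx r → ℝ) :
    (∏ p : LTIdx r,
        (if p.1.1 = p.1.2 then 2 * Wof ω0 p.1.2 p.1.2 ^ 2 else Wof ω0 p.1.2 p.1.2))
      = 2 ^ r * ∏ j : Fin r, (Wof ω0 j j) ^ (r - (j : ℕ) + 1) := by
  rw [← Equiv.prod_comp (ltEquiv r).symm]
  rw [← Finset.univ_sigma_univ, Finset.prod_sigma]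
  have key : ∀ j : Fin r,
      (∏ i : {i : Fin r // j ≤ i},
        (if (i : Fin r) = j then 2 * Wof ω0 j j ^ 2 else Wof ω0 j j))
      = 2 * (Wof ω0 j j) ^ (r - (j : ℕ) + 1) := by
    intro j
    rw [← Finset.prod_subtype (Finset.Ici j) (fun i => Finset.mem_Ici)
      (fun i => if i = j then 2 * Wof ω0 j j ^ 2 else Wof ω0 j j)]
    rw [← Finset.Ioi_insert, Finset.prod_insert (Finset.notMem_Ioi_self)]
    rw [if_pos rfl]
    have : ∀ i ∈ Finset.Ioi j, (if i = j then 2 * Wof ω0 j j ^ 2 else Wof ω0 j j)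
        = Wof ω0 j j := by
      intro i hi
      rw [if_neg (by exact fun e => absurd (e ▸ hi) (Finset.notMem_Ioi_self))]
    rw [Finset.prod_congr rfl this, Finset.prod_const, Fin.card_Ioi]
    have hj := j.isLt
    have : r - 1 - (j : ℕ) + 2 = r - (j : ℕ) + 1 := by omega
    rw [← this, pow_add]
    ring
  calc (∏ j : Fin r, ∏ i : {i : Fin r // j ≤ i},
        (if ((ltEquiv r).symm ⟨j, i⟩).1.1 = ((ltEquiv r).symm ⟨j, i⟩).1.2
          then 2 * Wof ω0 ((ltEquiv r).symm ⟨j, i⟩).1.2 ((ltEquiv r).symm ⟨j, i⟩).1.2 ^ 2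
          else Wof ω0 ((ltEquiv r).symm ⟨j, i⟩).1.2 ((ltEquiv r).symm ⟨j, i⟩).1.2))
      = ∏ j : Fin r, (2 * (Wof ω0 j j) ^ (r - (j : ℕ) + 1)) := by
        refine Finset.prod_congr rfl fun j _ => ?_
        rw [← key j]
        rfl
    _ = 2 ^ r * ∏ j : Fin r, (Wof ω0 j j) ^ (r - (j : ℕ) + 1) := by
        rw [Finset.prod_mul_distrib, Finset.prod_const]
        simp

/-- **Jacobian determinant of the log-Cholesky parametrization of `Ω = WWᵀ`.**
The map `ω ↦ v(Ω)` has Jacobian determinant `|∂v(Ω)/∂ω| = 2^r ∏_{i=1}^r W_{ii}^{r−i+2}`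
(for the 0-based index `j`, the exponent is `r − j + 1`); equivalently, the density induced
on `ω` by a density `p(Ω)` on positive definite matrices satisfies
`log p(ω) = log p(Ω) + r log 2 + Σ_{i=1}^r (r−i+2) log(W_{ii})`. -/
theorem jacobian_logCholesky
    (r : ℕ) (ω0 : LTIdx r → ℝ) :
    |LinearMap.det ((fderiv ℝ (vOmega (r := r)) ω0 :
        (LTIdx r → ℝ) →L[ℝ] (LTIdx r → ℝ)) : (LTIdx r → ℝ) →ₗ[ℝ] (LTIdx r → ℝ))|
        = 2 ^ r * ∏ j : Fin r, (Wof ω0 j j) ^ (r - (j : ℕ) + 1) ∧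
      ∀ pdens : Matrix (Fin r) (Fin r) ℝ → ℝ,
        0 < pdens (Wof ω0 * (Wof ω0)ᵀ) →
        Real.log (pdens (Wof ω0 * (Wof ω0)ᵀ) *
            |LinearMap.det ((fderiv ℝ (vOmega (r := r)) ω0 :
              (LTIdx r → ℝ) →L[ℝ] (LTIdx r → ℝ)) : (LTIdx r → ℝ) →ₗ[ℝ] (LTIdx r → ℝ))|)
          = Real.log (pdens (Wof ω0 * (Wof ω0)ᵀ)) + r * Real.log 2
              + ∑ j : Fin r, ((r : ℝ) - (j : ℕ) + 1) * Real.log (Wof ω0 j j) := by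
  have hpos : 0 < 2 ^ r * ∏ j : Fin r, (Wof ω0 j j) ^ (r - (j : ℕ) + 1) :=
    mul_pos (pow_pos two_pos r)
      (Finset.prod_pos fun j _ => pow_pos (Wof_diag_pos ω0 j) _)
  have habs : |LinearMap.det ((fderiv ℝ (vOmega (r := r)) ω0 :
        (LTIdx r → ℝ) →L[ℝ] (LTIdx r → ℝ)) : (LTIdx r → ℝ) →ₗ[ℝ] (LTIdx r → ℝ))|
      = 2 ^ r * ∏ j : Fin r, (Wof ω0 j j) ^ (r - (j : ℕ) + 1) := by
    rw [fderiv_vOmega, det_Lder, prod_diag]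
    exact abs_of_pos hpos
  refine ⟨habs, fun pdens hp => ?_⟩
  rw [habs, Real.log_mul (ne_of_gt hp) (ne_of_gt hpos),
    Real.log_mul (ne_of_gt (pow_pos two_pos r))
      (ne_of_gt (Finset.prod_pos fun j _ => pow_pos (Wof_diag_pos ω0 j) _)),
    Real.log_pow,
    Real.log_prod (fun j _ => ne_of_gt (pow_pos (Wof_diag_pos ω0 j) _)), ← add_assoc]
  congr 1
  refine Finset.sum_congr rfl fun j _ => ?_
  rw [Real.log_pow]
  have hj : (j : ℕ) ≤ r := le_of_lt j.isLt
  push_cast [Nat.cast_sub hj]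
  ring
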